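/- In the discrete lm-SCM for the motivating example (Figure 1c), under Positivity, the FATE is recovered by the sequential-factorization estimand of Equations (4)–(5): φ = Σ_{w ∈ 𝒲} μ(W = w) · Σ_{y ∈ 𝒴₀} μ(Y₀ = y | W = w, R = 1) · (Q₁(w, y, 1) − Q₁(w, y, 0)), where Q₁(w, y, a) := E[Y₁ | W = w, Y₀ = y, A = a, R = 1]. -/

import Mathlib

open MeasureTheory ProbabilityTheory

/-- Conditional probability of `S` given the event `E`: `μ(S ∩ E) / μ(E)`. -/
noncomputable def cprob {Ω : Type*} [MeasurableSpace Ω] (μ : Measure Ω) (S E : Set Ω) : ENNReal :=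
  μ (S ∩ E) / μ E

/-- Conditional expectation of `X` given the event `E`: `μ(E)⁻¹ * ∫_E X dμ`. -/
noncomputable def cexp {Ω : Type*} [MeasurableSpace Ω] (μ : Measure Ω) (X : Ω → ℝ) (E : Set Ω) : ℝ :=
  ((μ E).toReal)⁻¹ * ∫ ω in E, X ω ∂μ

lemma aux_core_int {Ω : Type*} [MeasurableSpace Ω] {μ : Measure Ω}
    [IsProbabilityMeasure μ] {E : Set Ω} (hEm : MeasurableSet E)
    {g : Ω → ℝ} (hgm : AEStronglyMeasurable g μ)
    (hIF : IndepFun (E.indicator (fun _ => (1:ℝ))) g μ) :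
    ∫ ω in E, g ω ∂μ = (μ E).toReal * ∫ ω, g ω ∂μ := by
  have h1 : E.indicator (fun _ => (1:ℝ)) * g = E.indicator g := by
    funext ω; by_cases h : ω ∈ E <;> simp [h]
  have h2 := hIF.integral_mul_eq_mul_integral ((measurable_const.indicator hEm).aestronglyMeasurable) hgm
  rw [h1] at h2
  rw [← integral_indicator hEm, show (∫ ω, E.indicator g ω ∂μ) = integral μ (E.indicator g) from rfl,
    h2]
  congr 1
  simp [integral_indicator hEm]
  rfl

lemma aux_core_lint {Ω : Type*} [MeasurableSpace Ω] {μ : Measure Ω}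
    [IsProbabilityMeasure μ] {E : Set Ω} (hEm : MeasurableSet E)
    {f : Ω → ENNReal}
    (h : ∫⁻ ω, f ω * E.indicator (fun _ => (1:ENNReal)) ω ∂μ
        = (∫⁻ ω, f ω ∂μ) * ∫⁻ ω, E.indicator (fun _ => (1:ENNReal)) ω ∂μ) :
    ∫⁻ ω in E, f ω ∂μ = μ E * ∫⁻ ω, f ω ∂μ := by
  have h1 : ∀ ω, f ω * E.indicator (fun _ => (1:ENNReal)) ω = E.indicator f ω := by
    intro ω; by_cases hω : ω ∈ E <;> simp [hω]
  simp_rw [h1] at h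
  rw [lintegral_indicator hEm, lintegral_indicator hEm, setLIntegral_one] at h
  rw [h, mul_comm]

lemma aux_indep_setIntegral {Ω : Type*} [mΩ : MeasurableSpace Ω] {μ : Measure Ω}
    [IsProbabilityMeasure μ] {M N : MeasurableSpace Ω} (hM : M ≤ mΩ) (hN : N ≤ mΩ)
    (hInd : Indep M N μ) {E : Set Ω} (hE : MeasurableSet[M] E)
    {g : Ω → ℝ} (hg : Measurable[N] g) :
    ∫ ω in E, g ω ∂μ = (μ E).toReal * ∫ ω, g ω ∂μ := by
  have hEm : MeasurableSet[mΩ] E := hM _ hE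
  have hc : Measurable[M] (fun _ : Ω => (1:ℝ)) := measurable_const
  have hXm : Measurable[M] (E.indicator (fun _ => (1:ℝ))) := hc.indicator hE
  have hIF : IndepFun (E.indicator (fun _ => (1:ℝ))) g μ := by
    rw [IndepFun_iff_Indep]
    exact indep_of_indep_of_le_left (indep_of_indep_of_le_right hInd hg.comap_le) hXm.comap_le
  exact @aux_core_int Ω mΩ μ ‹_› E hEm g ((hg.mono hN le_rfl).aestronglyMeasurable) hIF

lemma aux_indep_setLIntegral {Ω : Type*} [mΩ : MeasurableSpace Ω] {μ : Measure Ω}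
    [IsProbabilityMeasure μ] {M N : MeasurableSpace Ω} (hM : M ≤ mΩ) (hN : N ≤ mΩ)
    (hInd : Indep M N μ) {E : Set Ω} (hE : MeasurableSet[M] E)
    {f : Ω → ENNReal} (hf : Measurable[N] f) :
    ∫⁻ ω in E, f ω ∂μ = μ E * ∫⁻ ω, f ω ∂μ := by
  have hEm : MeasurableSet[mΩ] E := hM _ hE
  have hc : Measurable[M] (fun _ : Ω => (1:ENNReal)) := measurable_const
  exact @aux_core_lint Ω mΩ μ ‹_› E hEm f
    (lintegral_mul_eq_lintegral_mul_lintegral_of_independent_measurableSpace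
      hN hM hInd.symm hf (hc.indicator hE))

section SCM

variable {Ω 𝒲 𝒰₀ 𝒰R 𝒰A 𝒰Y : Type*}
    [mΩ : MeasurableSpace Ω] [MeasurableSpace 𝒲] [MeasurableSpace 𝒰₀] [MeasurableSpace 𝒰R]
    [MeasurableSpace 𝒰A] [MeasurableSpace 𝒰Y]
    {μ : Measure Ω} [IsProbabilityMeasure μ]
    {W : Ω → 𝒲} {U₀ : Ω → 𝒰₀} {UR : Ω → 𝒰R} {UA : Ω → 𝒰A} {UY : Ω → 𝒰Y}

lemma aux_scm_meas (hW : Measurable W) (hU₀ : Measurable U₀) (hUR : Measurable UR)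
    (hUA : Measurable UA) (hUY : Measurable UY)
    (hIndep : iIndep
      (![MeasurableSpace.comap W inferInstance, MeasurableSpace.comap U₀ inferInstance,
         MeasurableSpace.comap UR inferInstance, MeasurableSpace.comap UA inferInstance,
         MeasurableSpace.comap UY inferInstance] : Fin 5 → MeasurableSpace Ω) μ)
    {S0 : Set 𝒲} {S1 : Set 𝒰₀} {S2 : Set 𝒰R} {S3 : Set 𝒰A}
    (h0 : MeasurableSet S0) (h1 : MeasurableSet S1) (h2 : MeasurableSet S2)
    (h3 : MeasurableSet S3) :
    μ (W ⁻¹' S0 ∩ U₀ ⁻¹' S1 ∩ UR ⁻¹' S2 ∩ UA ⁻¹' S3)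
      = μ (W ⁻¹' S0) * μ (U₀ ⁻¹' S1) * μ (UR ⁻¹' S2) * μ (UA ⁻¹' S3) := by
  set s : Fin 5 → Set Ω := ![W ⁻¹' S0, U₀ ⁻¹' S1, UR ⁻¹' S2, UA ⁻¹' S3, Set.univ] with hs
  have h := hIndep.meas_iInter (s := s) (fun i => by
    fin_cases i
    exacts [⟨S0, h0, rfl⟩, ⟨S1, h1, rfl⟩, ⟨S2, h2, rfl⟩, ⟨S3, h3, rfl⟩, MeasurableSet.univ])
  have h1' : (⋂ i, s i) = W ⁻¹' S0 ∩ U₀ ⁻¹' S1 ∩ UR ⁻¹' S2 ∩ UA ⁻¹' S3 := by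
    ext ω
    simp [hs, Fin.forall_fin_succ, and_assoc]
  rw [h1', Fin.prod_univ_five] at h
  simpa [hs] using h

lemma aux_scm_integral (hW : Measurable W) (hU₀ : Measurable U₀) (hUR : Measurable UR)
    (hUA : Measurable UA) (hUY : Measurable UY)
    (hIndep : iIndep
      (![MeasurableSpace.comap W inferInstance, MeasurableSpace.comap U₀ inferInstance,
         MeasurableSpace.comap UR inferInstance, MeasurableSpace.comap UA inferInstance,
         MeasurableSpace.comap UY inferInstance] : Fin 5 → MeasurableSpace Ω) μ)
    {S0 : Set 𝒲} {S1 : Set 𝒰₀} {S2 : Set 𝒰R} {S3 : Set 𝒰A}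
    (h0 : MeasurableSet S0) (h1 : MeasurableSet S1) (h2 : MeasurableSet S2)
    (h3 : MeasurableSet S3) {h : 𝒰Y → ℝ} (hh : Measurable h) :
    ∫ ω in (W ⁻¹' S0 ∩ U₀ ⁻¹' S1 ∩ UR ⁻¹' S2 ∩ UA ⁻¹' S3), h (UY ω) ∂μ
      = (μ (W ⁻¹' S0 ∩ U₀ ⁻¹' S1 ∩ UR ⁻¹' S2 ∩ UA ⁻¹' S3)).toReal
          * ∫ ω, h (UY ω) ∂μ := by
  set m : Fin 5 → MeasurableSpace Ω :=
    ![MeasurableSpace.comap W inferInstance, MeasurableSpace.comap U₀ inferInstance,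
      MeasurableSpace.comap UR inferInstance, MeasurableSpace.comap UA inferInstance,
      MeasurableSpace.comap UY inferInstance] with hm
  have hle : ∀ i, m i ≤ mΩ := by
    intro i
    fin_cases i
    exacts [hW.comap_le, hU₀.comap_le, hUR.comap_le, hUA.comap_le, hUY.comap_le]
  have hIndM : Indep (⨆ i ∈ ({4}ᶜ : Set (Fin 5)), m i) (m 4) μ := by
    have h := indep_biSup_compl hle hIndep ({4}ᶜ : Set (Fin 5))
    simpa [compl_compl] using h
  have hmemM : MeasurableSet[⨆ i ∈ ({4}ᶜ : Set (Fin 5)), m i]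
      (W ⁻¹' S0 ∩ U₀ ⁻¹' S1 ∩ UR ⁻¹' S2 ∩ UA ⁻¹' S3) := by
    have e0 := le_biSup m (show (0:Fin 5) ∈ ({4}ᶜ : Set (Fin 5)) by decide)
    have e1 := le_biSup m (show (1:Fin 5) ∈ ({4}ᶜ : Set (Fin 5)) by decide)
    have e2 := le_biSup m (show (2:Fin 5) ∈ ({4}ᶜ : Set (Fin 5)) by decide)
    have e3 := le_biSup m (show (3:Fin 5) ∈ ({4}ᶜ : Set (Fin 5)) by decide)
    exact (((e0 _ ⟨S0, h0, rfl⟩).inter (e1 _ ⟨S1, h1, rfl⟩)).inter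
      (e2 _ ⟨S2, h2, rfl⟩)).inter (e3 _ ⟨S3, h3, rfl⟩)
  have hUYm4 : Measurable[m 4] UY := Measurable.of_comap_le le_rfl
  exact aux_indep_setIntegral (iSup₂_le fun i _ => hle i) (hle 4) hIndM hmemM (hh.comp hUYm4)

lemma aux_scm_lintegral (hW : Measurable W) (hU₀ : Measurable U₀) (hUR : Measurable UR)
    (hUA : Measurable UA) (hUY : Measurable UY)
    (hIndep : iIndep
      (![MeasurableSpace.comap W inferInstance, MeasurableSpace.comap U₀ inferInstance,
         MeasurableSpace.comap UR inferInstance, MeasurableSpace.comap UA inferInstance,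
         MeasurableSpace.comap UY inferInstance] : Fin 5 → MeasurableSpace Ω) μ)
    {S0 : Set 𝒲} {S1 : Set 𝒰₀} {S2 : Set 𝒰R} {S3 : Set 𝒰A}
    (h0 : MeasurableSet S0) (h1 : MeasurableSet S1) (h2 : MeasurableSet S2)
    (h3 : MeasurableSet S3) {f : 𝒰Y → ENNReal} (hf : Measurable f) :
    ∫⁻ ω in (W ⁻¹' S0 ∩ U₀ ⁻¹' S1 ∩ UR ⁻¹' S2 ∩ UA ⁻¹' S3), f (UY ω) ∂μ
      = μ (W ⁻¹' S0 ∩ U₀ ⁻¹' S1 ∩ UR ⁻¹' S2 ∩ UA ⁻¹' S3)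
          * ∫⁻ ω, f (UY ω) ∂μ := by
  set m : Fin 5 → MeasurableSpace Ω :=
    ![MeasurableSpace.comap W inferInstance, MeasurableSpace.comap U₀ inferInstance,
      MeasurableSpace.comap UR inferInstance, MeasurableSpace.comap UA inferInstance,
      MeasurableSpace.comap UY inferInstance] with hm
  have hle : ∀ i, m i ≤ mΩ := by
    intro i
    fin_cases i
    exacts [hW.comap_le, hU₀.comap_le, hUR.comap_le, hUA.comap_le, hUY.comap_le]
  have hIndM : Indep (⨆ i ∈ ({4}ᶜ : Set (Fin 5)), m i) (m 4) μ := by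
    have h := indep_biSup_compl hle hIndep ({4}ᶜ : Set (Fin 5))
    simpa [compl_compl] using h
  have hmemM : MeasurableSet[⨆ i ∈ ({4}ᶜ : Set (Fin 5)), m i]
      (W ⁻¹' S0 ∩ U₀ ⁻¹' S1 ∩ UR ⁻¹' S2 ∩ UA ⁻¹' S3) := by
    have e0 := le_biSup m (show (0:Fin 5) ∈ ({4}ᶜ : Set (Fin 5)) by decide)
    have e1 := le_biSup m (show (1:Fin 5) ∈ ({4}ᶜ : Set (Fin 5)) by decide)
    have e2 := le_biSup m (show (2:Fin 5) ∈ ({4}ᶜ : Set (Fin 5)) by decide)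
    have e3 := le_biSup m (show (3:Fin 5) ∈ ({4}ᶜ : Set (Fin 5)) by decide)
    exact (((e0 _ ⟨S0, h0, rfl⟩).inter (e1 _ ⟨S1, h1, rfl⟩)).inter
      (e2 _ ⟨S2, h2, rfl⟩)).inter (e3 _ ⟨S3, h3, rfl⟩)
  have hUYm4 : Measurable[m 4] UY := Measurable.of_comap_le le_rfl
  exact aux_indep_setLIntegral (iSup₂_le fun i _ => hle i) (hle 4) hIndM hmemM (hf.comp hUYm4)

end SCM
/-- In the discrete lm-SCM of Figure 1c, under positivity, the FATE is recovered by the sequential-factorization estimand of Equations (4)-(5). -/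
theorem lmSCM_fate_recovery
    {Ω 𝒲 𝒴₀ 𝒰₀ 𝒰R 𝒰A 𝒰Y : Type*}
    [MeasurableSpace Ω]
    [Fintype 𝒲] [Nonempty 𝒲] [MeasurableSpace 𝒲] [MeasurableSingletonClass 𝒲]
    [Fintype 𝒴₀] [Nonempty 𝒴₀] [MeasurableSpace 𝒴₀] [MeasurableSingletonClass 𝒴₀]
    [MeasurableSpace 𝒰₀] [MeasurableSpace 𝒰R] [MeasurableSpace 𝒰A] [MeasurableSpace 𝒰Y]
    (μ : Measure Ω) [IsProbabilityMeasure μ]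
    (W : Ω → 𝒲) (U₀ : Ω → 𝒰₀) (UR : Ω → 𝒰R) (UA : Ω → 𝒰A) (UY : Ω → 𝒰Y)
    (hW : Measurable W) (hU₀ : Measurable U₀) (hUR : Measurable UR)
    (hUA : Measurable UA) (hUY : Measurable UY)
    (hIndep : iIndep
      (![MeasurableSpace.comap W inferInstance, MeasurableSpace.comap U₀ inferInstance,
         MeasurableSpace.comap UR inferInstance, MeasurableSpace.comap UA inferInstance,
         MeasurableSpace.comap UY inferInstance] : Fin 5 → MeasurableSpace Ω) μ)
    (f₀ : 𝒲 × 𝒰₀ → 𝒴₀) (hf₀ : Measurable f₀)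
    (fR : 𝒲 × 𝒰R → Fin 2) (hfR : Measurable fR)
    (fA : 𝒲 × 𝒴₀ × 𝒰A → Fin 2) (hfA : Measurable fA)
    (gA : 𝒲 × 𝒰A → Fin 2) (hgA : Measurable gA)
    (fY : 𝒲 × 𝒴₀ × Fin 2 × 𝒰Y → ℝ) (hfY : Measurable fY)
    (gY : 𝒲 × Fin 2 × 𝒰Y → ℝ) (hgY : Measurable gY)
    (Y₀ : Ω → 𝒴₀) (R A : Ω → Fin 2) (Y₁ : Ω → ℝ)
    (hY₀ : ∀ ω, Y₀ ω = f₀ (W ω, U₀ ω))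
    (hR : ∀ ω, R ω = fR (W ω, UR ω))
    (hA : ∀ ω, A ω = if R ω = 1 then fA (W ω, Y₀ ω, UA ω) else gA (W ω, UA ω))
    (hY₁ : ∀ ω, Y₁ ω = if R ω = 1 then fY (W ω, Y₀ ω, A ω, UY ω) else gY (W ω, A ω, UY ω))
    (Ynat : Fin 2 → Ω → ℝ)
    (hYnat : ∀ (a : Fin 2) (ω : Ω),
      Ynat a ω = if R ω = 1 then fY (W ω, Y₀ ω, a, UY ω) else gY (W ω, a, UY ω))
    (Yful : Fin 2 → Ω → ℝ)
    (hYful : ∀ (a : Fin 2) (ω : Ω), Yful a ω = fY (W ω, Y₀ ω, a, UY ω))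
    (hIntY₁ : Integrable Y₁ μ)
    (hIntN0 : Integrable (Ynat 0) μ) (hIntN1 : Integrable (Ynat 1) μ)
    (hIntF0 : Integrable (Yful 0) μ) (hIntF1 : Integrable (Yful 1) μ)
    (hpos : ∀ (w : 𝒲) (y : 𝒴₀) (r a : Fin 2),
      0 < μ {ω | W ω = w ∧ Y₀ ω = y ∧ R ω = r ∧ A ω = a})
    (Q1 : 𝒲 → 𝒴₀ → Fin 2 → ℝ)
    (hQ1 : ∀ (w : 𝒲) (y : 𝒴₀) (a : Fin 2),
      Q1 w y a = cexp μ Y₁ {ω | W ω = w ∧ Y₀ ω = y ∧ A ω = a ∧ R ω = 1})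
    (Q0 : 𝒲 → Fin 2 → ℝ)
    (hQ0 : ∀ (w : 𝒲) (a : Fin 2), Q0 w a = cexp μ Y₁ {ω | W ω = w ∧ A ω = a ∧ R ω = 0})
    :
    (∫ ω, Yful 1 ω ∂μ) - (∫ ω, Yful 0 ω ∂μ)
      = ∑ w : 𝒲, (μ {ω | W ω = w}).toReal *
          ∑ y : 𝒴₀, (cprob μ {ω | Y₀ ω = y} {ω | W ω = w ∧ R ω = 1}).toReal *
            (Q1 w y 1 - Q1 w y 0) := by
  classical
  -- measurable building blocks
  have hsW : ∀ w : 𝒲, MeasurableSet ({w} : Set 𝒲) := fun w => measurableSet_singleton w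
  have hB0 : ∀ (w : 𝒲) (y : 𝒴₀), MeasurableSet {u : 𝒰₀ | f₀ (w, u) = y} := fun w y =>
    (hf₀.comp measurable_prodMk_left) (measurableSet_singleton y)
  have hBR : ∀ w : 𝒲, MeasurableSet {u : 𝒰R | fR (w, u) = 1} := fun w =>
    (hfR.comp measurable_prodMk_left) (measurableSet_singleton 1)
  have hBA : ∀ (w : 𝒲) (y : 𝒴₀) (a : Fin 2), MeasurableSet {u : 𝒰A | fA (w, y, u) = a} :=
    fun w y a =>
      (hfA.comp (measurable_prodMk_left.comp measurable_prodMk_left)) (measurableSet_singleton a)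
  have hHm : ∀ (w : 𝒲) (y : 𝒴₀) (a : Fin 2), Measurable (fun u : 𝒰Y => fY (w, y, a, u)) :=
    fun w y a => hfY.comp
      (measurable_prodMk_left.comp (measurable_prodMk_left.comp measurable_prodMk_left))
  -- event identities
  have hE1 : ∀ (w : 𝒲) (y : 𝒴₀) (a : Fin 2),
      {ω | W ω = w ∧ Y₀ ω = y ∧ A ω = a ∧ R ω = 1}
        = W ⁻¹' {w} ∩ U₀ ⁻¹' {u | f₀ (w, u) = y} ∩ UR ⁻¹' {u | fR (w, u) = 1}
            ∩ UA ⁻¹' {u | fA (w, y, u) = a} := by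
    intro w y a
    ext ω
    simp only [Set.mem_setOf_eq, Set.mem_inter_iff, Set.mem_preimage, Set.mem_singleton_iff]
    constructor
    · rintro ⟨hw, hy, ha, hr⟩
      subst hw; subst hy
      have hAa : fA (W ω, Y₀ ω, UA ω) = a := by
        have h := hA ω; rw [if_pos hr] at h; exact h.symm.trans ha
      exact ⟨⟨⟨rfl, (hY₀ ω).symm⟩, (hR ω).symm.trans hr⟩, hAa⟩
    · rintro ⟨⟨⟨hw, h0⟩, hr⟩, ha⟩
      subst hw; subst h0
      have hr1 : R ω = 1 := (hR ω).trans hr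
      have hAa : A ω = a := by
        have h := hA ω; rw [if_pos hr1] at h
        rw [h, hY₀ ω]; exact ha
      exact ⟨rfl, hY₀ ω, hAa, hr1⟩
  have hGeq : ∀ (w : 𝒲) (y : 𝒴₀),
      {ω | W ω = w ∧ Y₀ ω = y} = W ⁻¹' {w} ∩ U₀ ⁻¹' {u | f₀ (w, u) = y} := by
    intro w y
    ext ω
    simp only [Set.mem_setOf_eq, Set.mem_inter_iff, Set.mem_preimage, Set.mem_singleton_iff]
    constructor
    · rintro ⟨hw, hy⟩; subst hw; subst hy; exact ⟨rfl, (hY₀ ω).symm⟩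
    · rintro ⟨hw, h0⟩; subst hw; subst h0; exact ⟨rfl, hY₀ ω⟩
  have hNum : ∀ (w : 𝒲) (y : 𝒴₀),
      {ω | Y₀ ω = y} ∩ {ω | W ω = w ∧ R ω = 1}
        = W ⁻¹' {w} ∩ U₀ ⁻¹' {u | f₀ (w, u) = y} ∩ UR ⁻¹' {u | fR (w, u) = 1} := by
    intro w y
    ext ω
    simp only [Set.mem_setOf_eq, Set.mem_inter_iff, Set.mem_preimage, Set.mem_singleton_iff]
    constructor
    · rintro ⟨hy, hw, hr⟩
      subst hw; subst hy
      exact ⟨⟨rfl, (hY₀ ω).symm⟩, (hR ω).symm.trans hr⟩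
    · rintro ⟨⟨hw, h0⟩, hr⟩
      subst hw; subst h0
      exact ⟨hY₀ ω, rfl, (hR ω).trans hr⟩
  have hDen : ∀ w : 𝒲,
      {ω | W ω = w ∧ R ω = 1} = W ⁻¹' {w} ∩ UR ⁻¹' {u | fR (w, u) = 1} := by
    intro w
    ext ω
    simp only [Set.mem_setOf_eq, Set.mem_inter_iff, Set.mem_preimage, Set.mem_singleton_iff]
    constructor
    · rintro ⟨hw, hr⟩; subst hw; exact ⟨rfl, (hR ω).symm.trans hr⟩
    · rintro ⟨hw, hr⟩; subst hw; exact ⟨rfl, (hR ω).trans hr⟩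
  -- factorization facts
  have hfacE1 : ∀ (w : 𝒲) (y : 𝒴₀) (a : Fin 2),
      μ {ω | W ω = w ∧ Y₀ ω = y ∧ A ω = a ∧ R ω = 1}
        = μ (W ⁻¹' {w}) * μ (U₀ ⁻¹' {u | f₀ (w, u) = y}) * μ (UR ⁻¹' {u | fR (w, u) = 1})
            * μ (UA ⁻¹' {u | fA (w, y, u) = a}) := by
    intro w y a
    rw [hE1 w y a]
    exact aux_scm_meas hW hU₀ hUR hUA hUY hIndep (hsW w) (hB0 w y) (hBR w) (hBA w y a)
  have hfacG : ∀ (w : 𝒲) (y : 𝒴₀),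
      μ (W ⁻¹' {w} ∩ U₀ ⁻¹' {u | f₀ (w, u) = y})
        = μ (W ⁻¹' {w}) * μ (U₀ ⁻¹' {u | f₀ (w, u) = y}) := by
    intro w y
    have h := aux_scm_meas hW hU₀ hUR hUA hUY hIndep (hsW w) (hB0 w y)
      (MeasurableSet.univ : MeasurableSet (Set.univ : Set 𝒰R))
      (MeasurableSet.univ : MeasurableSet (Set.univ : Set 𝒰A))
    simpa using h
  have hfacNum : ∀ (w : 𝒲) (y : 𝒴₀),
      μ (W ⁻¹' {w} ∩ U₀ ⁻¹' {u | f₀ (w, u) = y} ∩ UR ⁻¹' {u | fR (w, u) = 1})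
        = μ (W ⁻¹' {w}) * μ (U₀ ⁻¹' {u | f₀ (w, u) = y}) * μ (UR ⁻¹' {u | fR (w, u) = 1}) := by
    intro w y
    have h := aux_scm_meas hW hU₀ hUR hUA hUY hIndep (hsW w) (hB0 w y) (hBR w)
      (MeasurableSet.univ : MeasurableSet (Set.univ : Set 𝒰A))
    simpa using h
  have hfacDen : ∀ w : 𝒲,
      μ (W ⁻¹' {w} ∩ UR ⁻¹' {u | fR (w, u) = 1})
        = μ (W ⁻¹' {w}) * μ (UR ⁻¹' {u | fR (w, u) = 1}) := by
    intro w
    have h := aux_scm_meas hW hU₀ hUR hUA hUY hIndep (hsW w)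
      (MeasurableSet.univ : MeasurableSet (Set.univ : Set 𝒰₀)) (hBR w)
      (MeasurableSet.univ : MeasurableSet (Set.univ : Set 𝒰A))
    simpa using h
  -- positivity
  have hposE1 : ∀ (w : 𝒲) (y : 𝒴₀) (a : Fin 2),
      0 < μ {ω | W ω = w ∧ Y₀ ω = y ∧ A ω = a ∧ R ω = 1} := by
    intro w y a
    refine lt_of_lt_of_le (hpos w y 1 a) (measure_mono ?_)
    rintro ω ⟨h1, h2, h3, h4⟩
    exact ⟨h1, h2, h4, h3⟩
  have hcomp : ∀ (w : 𝒲) (y : 𝒴₀),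
      μ (W ⁻¹' {w}) ≠ 0 ∧ μ (U₀ ⁻¹' {u | f₀ (w, u) = y}) ≠ 0
        ∧ μ (UR ⁻¹' {u | fR (w, u) = 1}) ≠ 0 := by
    intro w y
    have h := (hposE1 w y 1).ne'
    rw [hfacE1 w y 1] at h
    simp only [ne_eq, mul_eq_zero, not_or] at h
    exact ⟨h.1.1.1, h.1.1.2, h.1.2⟩
  -- integrability of the fiber integrands
  have hIntF : ∀ a : Fin 2, Integrable (Yful a) μ := by
    intro a; fin_cases a; exacts [hIntF0, hIntF1]
  have hGm : ∀ (w : 𝒲) (y : 𝒴₀), MeasurableSet {ω | W ω = w ∧ Y₀ ω = y} := by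
    intro w y
    rw [hGeq w y]
    exact (hW (hsW w)).inter (hU₀ (hB0 w y))
  have hIntH : ∀ (w : 𝒲) (y : 𝒴₀) (a : Fin 2),
      Integrable (fun ω => fY (w, y, a, UY ω)) μ := by
    intro w y a
    have hm : Measurable (fun ω => fY (w, y, a, UY ω)) := (hHm w y a).comp hUY
    refine ⟨hm.aestronglyMeasurable, ?_⟩
    rw [hasFiniteIntegral_def]
    have hnn : Measurable (fun u : 𝒰Y => (‖fY (w, y, a, u)‖₊ : ENNReal)) := (hHm w y a).nnnorm.coe_nnreal_ennreal
    have hfac := aux_scm_lintegral hW hU₀ hUR hUA hUY hIndep (hsW w) (hB0 w y)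
      (MeasurableSet.univ : MeasurableSet (Set.univ : Set 𝒰R))
      (MeasurableSet.univ : MeasurableSet (Set.univ : Set 𝒰A)) hnn
    simp only [Set.preimage_univ, Set.inter_univ] at hfac
    set G : Set Ω := W ⁻¹' {w} ∩ U₀ ⁻¹' {u | f₀ (w, u) = y} with hG
    have hGmeas : MeasurableSet G := (hW (hsW w)).inter (hU₀ (hB0 w y))
    have hcongr : ∫⁻ ω in G, (‖fY (w, y, a, UY ω)‖₊ : ENNReal) ∂μ
        = ∫⁻ ω in G, (‖Yful a ω‖₊ : ENNReal) ∂μ := by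
      refine setLIntegral_congr_fun hGmeas ?_
      rintro ω ⟨hw, h0⟩
      have hw' : W ω = w := hw
      have hy' : Y₀ ω = y := (hY₀ ω).trans (by rw [hw']; exact h0)
      dsimp only
      rw [hYful a ω, hw', hy']
    have hle' : μ G * ∫⁻ ω, (‖fY (w, y, a, UY ω)‖₊ : ENNReal) ∂μ
        ≤ ∫⁻ ω, (‖Yful a ω‖₊ : ENNReal) ∂μ := by
      rw [← hfac, hcongr]
      exact setLIntegral_le_lintegral _ _
    have htop : μ G * ∫⁻ ω, (‖fY (w, y, a, UY ω)‖₊ : ENNReal) ∂μ ≠ ⊤ :=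
      ne_top_of_le_ne_top (hIntF a).2.ne hle'
    have hG0 : μ G ≠ 0 := by
      rw [hG, hfacG w y]
      exact mul_ne_zero (hcomp w y).1 (hcomp w y).2.1
    exact ENNReal.lt_top_of_mul_ne_top_right htop hG0
  -- Q1 identification
  have hQ : ∀ (w : 𝒲) (y : 𝒴₀) (a : Fin 2),
      Q1 w y a = ∫ ω, fY (w, y, a, UY ω) ∂μ := by
    intro w y a
    have hE1meas : MeasurableSet {ω | W ω = w ∧ Y₀ ω = y ∧ A ω = a ∧ R ω = 1} := by
      rw [hE1 w y a]
      exact (((hW (hsW w)).inter (hU₀ (hB0 w y))).inter (hUR (hBR w))).inter (hUA (hBA w y a))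
    have hcongr : ∫ ω in {ω | W ω = w ∧ Y₀ ω = y ∧ A ω = a ∧ R ω = 1}, Y₁ ω ∂μ
        = ∫ ω in {ω | W ω = w ∧ Y₀ ω = y ∧ A ω = a ∧ R ω = 1}, fY (w, y, a, UY ω) ∂μ := by
      refine setIntegral_congr_fun hE1meas ?_
      rintro ω ⟨hw, hy, ha, hr⟩
      rw [hY₁ ω, if_pos hr, hw, hy, ha]
    have hkey : ∫ ω in {ω | W ω = w ∧ Y₀ ω = y ∧ A ω = a ∧ R ω = 1}, fY (w, y, a, UY ω) ∂μ
        = (μ {ω | W ω = w ∧ Y₀ ω = y ∧ A ω = a ∧ R ω = 1}).toReal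
            * ∫ ω, fY (w, y, a, UY ω) ∂μ := by
      rw [hE1 w y a]
      exact aux_scm_integral hW hU₀ hUR hUA hUY hIndep (hsW w) (hB0 w y) (hBR w) (hBA w y a)
        (hHm w y a)
    have hne : (μ {ω | W ω = w ∧ Y₀ ω = y ∧ A ω = a ∧ R ω = 1}).toReal ≠ 0 :=
      (ENNReal.toReal_pos (hposE1 w y a).ne' (measure_ne_top μ _)).ne'
    rw [hQ1 w y a]
    simp only [cexp]
    rw [hcongr, hkey, ← mul_assoc, inv_mul_cancel₀ hne, one_mul]
  -- expectation expansion
  have hExp : ∀ a : Fin 2, ∫ ω, Yful a ω ∂μ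
      = ∑ w : 𝒲, ∑ y : 𝒴₀,
          (μ (W ⁻¹' {w})).toReal * (μ (U₀ ⁻¹' {u | f₀ (w, u) = y})).toReal
            * ∫ ω, fY (w, y, a, UY ω) ∂μ := by
    intro a
    have hpt : ∀ ω, Yful a ω
        = ∑ p : 𝒲 × 𝒴₀, ({ω | W ω = p.1 ∧ Y₀ ω = p.2}).indicator (Yful a) ω := by
      intro ω
      rw [Finset.sum_eq_single (W ω, Y₀ ω)]
      · exact (Set.indicator_of_mem (show ω ∈ {ω' | W ω' = W ω ∧ Y₀ ω' = Y₀ ω} from ⟨rfl, rfl⟩)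
          (Yful a)).symm
      · intro p _ hp
        refine Set.indicator_of_notMem ?_ _
        rintro ⟨h1, h2⟩
        exact hp (Prod.ext h1.symm h2.symm)
      · intro h; exact absurd (Finset.mem_univ _) h
    have step1 : ∫ ω, Yful a ω ∂μ
        = ∑ p : 𝒲 × 𝒴₀, ∫ ω in {ω | W ω = p.1 ∧ Y₀ ω = p.2}, Yful a ω ∂μ := by
      rw [integral_congr_ae (Filter.Eventually.of_forall hpt),
        integral_finset_sum _ (fun p _ => (hIntF a).indicator (hGm p.1 p.2))]
      exact Finset.sum_congr rfl fun p _ => integral_indicator (hGm p.1 p.2)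
    have step2 : ∀ p : 𝒲 × 𝒴₀, ∫ ω in {ω | W ω = p.1 ∧ Y₀ ω = p.2}, Yful a ω ∂μ
        = (μ (W ⁻¹' {p.1})).toReal * (μ (U₀ ⁻¹' {u | f₀ (p.1, u) = p.2})).toReal
            * ∫ ω, fY (p.1, p.2, a, UY ω) ∂μ := by
      rintro ⟨w, y⟩
      have hcongr : ∫ ω in {ω | W ω = w ∧ Y₀ ω = y}, Yful a ω ∂μ
          = ∫ ω in {ω | W ω = w ∧ Y₀ ω = y}, fY (w, y, a, UY ω) ∂μ := by
        refine setIntegral_congr_fun (hGm w y) ?_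
        rintro ω ⟨hw, hy⟩
        rw [hYful a ω, hw, hy]
      have hkey := aux_scm_integral hW hU₀ hUR hUA hUY hIndep (hsW w) (hB0 w y)
        (MeasurableSet.univ : MeasurableSet (Set.univ : Set 𝒰R))
        (MeasurableSet.univ : MeasurableSet (Set.univ : Set 𝒰A)) (hHm w y a)
      simp only [Set.preimage_univ, Set.inter_univ] at hkey
      rw [hcongr, hGeq w y, hkey, hfacG w y, ENNReal.toReal_mul]
    rw [step1]
    rw [Finset.sum_congr rfl fun p _ => step2 p]
    rw [Fintype.sum_prod_type]
  -- conditional probability identification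
  have hC : ∀ (w : 𝒲) (y : 𝒴₀),
      (cprob μ {ω | Y₀ ω = y} {ω | W ω = w ∧ R ω = 1}).toReal
        = (μ (U₀ ⁻¹' {u | f₀ (w, u) = y})).toReal := by
    intro w y
    have hWne : μ (W ⁻¹' {w}) ≠ 0 := (hcomp w y).1
    have hRne : μ (UR ⁻¹' {u | fR (w, u) = 1}) ≠ 0 := (hcomp w y).2.2
    have hd0 : μ (W ⁻¹' {w}) * μ (UR ⁻¹' {u | fR (w, u) = 1}) ≠ 0 := mul_ne_zero hWne hRne
    have hdt : μ (W ⁻¹' {w}) * μ (UR ⁻¹' {u | fR (w, u) = 1}) ≠ ⊤ :=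
      ENNReal.mul_ne_top (measure_ne_top μ _) (measure_ne_top μ _)
    have : cprob μ {ω | Y₀ ω = y} {ω | W ω = w ∧ R ω = 1}
        = μ (U₀ ⁻¹' {u | f₀ (w, u) = y}) := by
      rw [cprob, hNum w y, hDen w, hfacNum w y, hfacDen w]
      rw [show μ (W ⁻¹' {w}) * μ (U₀ ⁻¹' {u | f₀ (w, u) = y}) * μ (UR ⁻¹' {u | fR (w, u) = 1})
          = μ (U₀ ⁻¹' {u | f₀ (w, u) = y})
            * (μ (W ⁻¹' {w}) * μ (UR ⁻¹' {u | fR (w, u) = 1})) by ring]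
      rw [div_eq_mul_inv, mul_assoc, ENNReal.mul_inv_cancel hd0 hdt, mul_one]
    rw [this]
  -- final assembly
  have hWset : ∀ w : 𝒲, {ω | W ω = w} = W ⁻¹' {w} := fun w => rfl
  rw [hExp 1, hExp 0, ← Finset.sum_sub_distrib]
  refine Finset.sum_congr rfl fun w _ => ?_
  rw [← Finset.sum_sub_distrib, hWset w, Finset.mul_sum]
  refine Finset.sum_congr rfl fun y _ => ?_
  rw [hC w y, hQ w y 1, hQ w y 0]
  ring
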